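/- Per-step consensus contraction inequality: Let W ∈ ℝ^{N×N} be symmetric, entrywise nonnegative and doubly stochastic, with eigenvalues 1 = λ₁ > λ₂ ≥ … ≥ λ_N > −1, and set λ := max(|λ₂|,|λ_N|) ∈ [0,1). Let J be the N×N all-ones matrix. Suppose x, e ∈ ℝ^N and define x⁺ = Wx + e, x̄ = (1/N)Jx, and x̄⁺ = (1/N)Jx⁺. Then ‖x⁺ − x̄⁺‖₂² ≤ ((1+λ²)/2)·‖x − x̄‖₂² + ((1+λ²)/(1−λ²))·‖e‖₂². -/

import Mathlib

open Finset Matrix Polynomial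

/-- charpoly is invariant under conjugation by an invertible matrix. -/
lemma aux_charpoly_conj {n : ℕ} (U A V : Matrix (Fin n) (Fin n) ℝ)
    (hUV : U * V = 1) : (U * A * V).charpoly = A.charpoly := by
  have hcomm : ∀ M : Matrix (Fin n) (Fin n) ℝ[X],
      (Matrix.scalar (Fin n)) X * M = M * (Matrix.scalar (Fin n)) X :=
    fun M => (Matrix.scalar_commute X (fun r' => Commute.all X r') M).eq
  have hmul : ∀ P Q : Matrix (Fin n) (Fin n) ℝ,
      (C : ℝ →+* ℝ[X]).mapMatrix (P * Q)
        = (C : ℝ →+* ℝ[X]).mapMatrix P * (C : ℝ →+* ℝ[X]).mapMatrix Q :=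
    fun P Q => _root_.map_mul _ P Q
  have hone : (C : ℝ →+* ℝ[X]).mapMatrix (1 : Matrix (Fin n) (Fin n) ℝ) = 1 :=
    _root_.map_one _
  have key : charmatrix (U * A * V) =
      (C : ℝ →+* ℝ[X]).mapMatrix U * charmatrix A * (C : ℝ →+* ℝ[X]).mapMatrix V := by
    unfold charmatrix
    rw [mul_sub, sub_mul, ← hmul, ← hmul]
    congr 1
    · rw [← hcomm, mul_assoc, ← hmul, hUV, hone, mul_one]
  rw [Matrix.charpoly, key, det_mul, det_mul, Matrix.charpoly]
  have h1 : ((C : ℝ →+* ℝ[X]).mapMatrix U).det * ((C : ℝ →+* ℝ[X]).mapMatrix V).det = 1 := by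
    rw [← det_mul, ← hmul, hUV, hone, det_one]
  calc ((C : ℝ →+* ℝ[X]).mapMatrix U).det * (charmatrix A).det
        * ((C : ℝ →+* ℝ[X]).mapMatrix V).det
      = (charmatrix A).det * (((C : ℝ →+* ℝ[X]).mapMatrix U).det
          * ((C : ℝ →+* ℝ[X]).mapMatrix V).det) := by ring
    _ = (charmatrix A).det := by rw [h1, mul_one]

lemma aux_charpoly_diag {n : ℕ} (d : Fin n → ℝ) :
    (Matrix.diagonal d).charpoly = ∏ i, (X - C (d i)) := by
  have h : charmatrix (Matrix.diagonal d) = Matrix.diagonal (fun i => X - C (d i)) := by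
    ext i j
    by_cases h : i = j
    · subst h; simp [charmatrix_apply_eq]
    · simp [charmatrix_apply_ne _ _ _ h, Matrix.diagonal_apply_ne _ h]
  rw [Matrix.charpoly, h, det_diagonal]

/-- Parseval-type identity from row orthonormality. -/
lemma aux_parseval {n : ℕ} (v : Fin n → Fin n → ℝ)
    (hrow : ∀ i j, ∑ k, v i k * v j k = if i = j then 1 else 0)
    (a : Fin n → ℝ) : ∑ k, (∑ i, a i * v i k) ^ 2 = ∑ i, a i ^ 2 := by
  classical
  have step : ∀ k, (∑ i, a i * v i k) ^ 2
      = ∑ i, ∑ j, (a i * a j) * (v i k * v j k) := by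
    intro k
    rw [sq, Finset.sum_mul_sum]
    exact Finset.sum_congr rfl fun i _ => Finset.sum_congr rfl fun j _ => by ring
  calc ∑ k, (∑ i, a i * v i k) ^ 2
      = ∑ k, ∑ i, ∑ j, (a i * a j) * (v i k * v j k) := Finset.sum_congr rfl fun k _ => step k
    _ = ∑ i, ∑ j, ∑ k, (a i * a j) * (v i k * v j k) := by
        rw [Finset.sum_comm]
        exact Finset.sum_congr rfl fun i _ => Finset.sum_comm
    _ = ∑ i, ∑ j, (a i * a j) * (if i = j then 1 else 0) := by
        refine Finset.sum_congr rfl fun i _ => Finset.sum_congr rfl fun j _ => ?_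
        rw [← Finset.mul_sum, hrow i j]
    _ = ∑ i, a i ^ 2 := by
        refine Finset.sum_congr rfl fun i _ => ?_
        simp [mul_ite, mul_one, mul_zero, Finset.sum_ite_eq, sq]

/-- Completeness: column orthonormality expansion. -/
lemma aux_complete {n : ℕ} (v : Fin n → Fin n → ℝ)
    (hcol : ∀ k l, ∑ i, v i k * v i l = if k = l then 1 else 0)
    (y : Fin n → ℝ) (k : Fin n) : ∑ i, (∑ l, v i l * y l) * v i k = y k := by
  classical
  calc ∑ i, (∑ l, v i l * y l) * v i k
      = ∑ i, ∑ l, y l * (v i l * v i k) := by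
        refine Finset.sum_congr rfl fun i _ => ?_
        rw [Finset.sum_mul]
        exact Finset.sum_congr rfl fun l _ => by ring
    _ = ∑ l, y l * ∑ i, (v i l * v i k) := by
        rw [Finset.sum_comm]
        exact Finset.sum_congr rfl fun l _ => (Finset.mul_sum _ _ _).symm
    _ = y k := by
        simp_rw [hcol]
        simp [mul_ite, mul_one, mul_zero, Finset.sum_ite_eq']

/-- Per-step consensus contraction inequality: for a symmetric, nonnegative, doubly stochastic
mixing matrix `W` with eigenvalues `1 = λ₁ > λ₂ ≥ … ≥ λ_N > −1`, `λ = max(|λ₂|,|λ_N|)`,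
`x⁺ = Wx + e`, `x̄ = (1/N)Jx`, `x̄⁺ = (1/N)Jx⁺`, one has
`‖x⁺ − x̄⁺‖₂² ≤ ((1+λ²)/2)‖x − x̄‖₂² + ((1+λ²)/(1−λ²))‖e‖₂²`. -/
theorem per_step_consensus_contraction
    (N : ℕ) (hN : 1 < N)
    (W : Matrix (Fin N) (Fin N) ℝ)
    (hWsymm : W.IsSymm)
    (hWnonneg : ∀ i j, 0 ≤ W i j)
    (hWrow : ∀ i, ∑ j, W i j = 1)
    (hWcol : ∀ j, ∑ i, W i j = 1)
    (eig : Fin N → ℝ)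
    (heig : W.charpoly = ∏ i, (Polynomial.X - Polynomial.C (eig i)))
    (hanti : Antitone eig)
    (heig1 : eig ⟨0, by omega⟩ = 1)
    (heig2 : eig ⟨1, hN⟩ < 1)
    (heiglast : -1 < eig ⟨N - 1, by omega⟩)
    (lam : ℝ) (hlam : lam = max |eig ⟨1, hN⟩| |eig ⟨N - 1, by omega⟩|)
    (x e xplus : Fin N → ℝ)
    (hxplus : xplus = W.mulVec x + e) :
    ∑ i, (xplus i - (N : ℝ)⁻¹ * ∑ j, xplus j) ^ 2
      ≤ ((1 + lam ^ 2) / 2) * ∑ i, (x i - (N : ℝ)⁻¹ * ∑ j, x j) ^ 2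
        + ((1 + lam ^ 2) / (1 - lam ^ 2)) * ∑ i, (e i) ^ 2 := by
  classical
  have hNR : (0 : ℝ) < N := by exact_mod_cast Nat.zero_lt_of_lt hN
  -- basic facts about lam
  have h1last : eig ⟨N - 1, by omega⟩ ≤ eig ⟨1, hN⟩ := by
    apply hanti
    simp [Fin.le_def]
    omega
  have heig2' : -1 < eig ⟨1, hN⟩ := lt_of_lt_of_le heiglast h1last
  have hlam_lt : lam < 1 := by
    rw [hlam]
    apply max_lt
    · rw [abs_lt]; exact ⟨heig2', heig2⟩
    · rw [abs_lt]; exact ⟨heiglast, lt_of_le_of_lt h1last heig2⟩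
  have hlam_nonneg : 0 ≤ lam := by
    rw [hlam]; exact le_trans (abs_nonneg _) (le_max_left _ _)
  -- Hermitian structure
  have hW : W.IsHermitian := by
    rw [Matrix.IsHermitian, Matrix.conjTranspose]
    ext i j; simpa using congrFun (congrFun hWsymm i) j
  set μ : Fin N → ℝ := hW.eigenvalues with hμdef
  set v : Fin N → Fin N → ℝ := fun i => hW.eigenvectorBasis i with hvdef
  -- charpoly of W equals product over μ
  have hcharμ : W.charpoly = ∏ i, (X - C (μ i)) := by
    have hspec := hW.spectral_theorem
    have hUV : (hW.eigenvectorUnitary : Matrix (Fin N) (Fin N) ℝ)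
        * (star hW.eigenvectorUnitary : Matrix (Fin N) (Fin N) ℝ) = 1 :=
      (Matrix.mem_unitaryGroup_iff).mp hW.eigenvectorUnitary.2
    have hdg : Matrix.diagonal (RCLike.ofReal ∘ hW.eigenvalues)
        = Matrix.diagonal hW.eigenvalues := by
      ext i j; by_cases h : i = j <;> simp [h]
    conv_lhs => rw [hspec]
    rw [hdg, Unitary.conjStarAlgAut_apply, aux_charpoly_conj _ _ _ hUV, aux_charpoly_diag]
  -- multiset of eigenvalues
  have hme : Multiset.map eig Finset.univ.val = Multiset.map μ Finset.univ.val := by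
    have h : (∏ i, (X - C (eig i))) = ∏ i, (X - C (μ i)) := by rw [← heig, hcharμ]
    have conv : ∀ f : Fin N → ℝ, (∏ i, (X - C (f i)))
        = ((Multiset.map f Finset.univ.val).map (fun a => X - C a)).prod := by
      intro f
      rw [Multiset.map_map]
      rfl
    have h2 := congrArg Polynomial.roots h
    rwa [conv eig, conv μ, Polynomial.roots_multiset_prod_X_sub_C,
      Polynomial.roots_multiset_prod_X_sub_C] at h2
  -- μ values are eig values
  have hmem : ∀ i, ∃ j, eig j = μ i := by
    intro i
    have h : μ i ∈ Multiset.map eig Finset.univ.val := by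
      rw [hme]; exact Multiset.mem_map.mpr ⟨i, by simp, rfl⟩
    obtain ⟨j, _, hj⟩ := Multiset.mem_map.mp h
    exact ⟨j, hj⟩
  -- exactly one eigenvalue equal to 1
  have heigfilter : (univ.filter (fun i => (1:ℝ) = eig i)) = {(⟨0, by omega⟩ : Fin N)} := by
    ext i
    simp only [Finset.mem_filter, Finset.mem_univ, true_and, Finset.mem_singleton]
    constructor
    · intro h
      by_contra hne
      have hval : 1 ≤ i.val := by
        rcases Nat.eq_zero_or_pos i.val with h0 | h1
        · exact absurd (Fin.ext h0) hne
        · exact h1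
      have h2 : eig i ≤ eig ⟨1, hN⟩ := hanti (by simp [Fin.le_def]; omega)
      rw [← h] at h2
      linarith
    · intro h; rw [h, heig1]
  have hcard : (univ.filter (fun i => (1:ℝ) = μ i)).card = 1 := by
    have hcnt := congrArg (Multiset.count (1:ℝ)) hme
    rw [Multiset.count_map, Multiset.count_map] at hcnt
    have hl : (univ.filter (fun i => (1:ℝ) = eig i)).card
        = Multiset.card (Multiset.filter (fun a => (1:ℝ) = eig a) univ.val) := by
      rw [Finset.card, Finset.filter_val]
    have hr : (univ.filter (fun i => (1:ℝ) = μ i)).card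
        = Multiset.card (Multiset.filter (fun a => (1:ℝ) = μ a) univ.val) := by
      rw [Finset.card, Finset.filter_val]
    rw [hr, ← hcnt, ← hl, heigfilter]
    simp
  obtain ⟨i₀, hi₀⟩ := Finset.card_eq_one.mp hcard
  have hμi₀ : (1:ℝ) = μ i₀ := by
    have : i₀ ∈ univ.filter (fun i => (1:ℝ) = μ i) := by rw [hi₀]; simp
    exact (Finset.mem_filter.mp this).2
  have hμne : ∀ i, i ≠ i₀ → μ i ≠ 1 := by
    intro i hi hcontra
    have : i ∈ univ.filter (fun i => (1:ℝ) = μ i) := by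
      simp [hcontra.symm]
    rw [hi₀, Finset.mem_singleton] at this
    exact hi this
  -- bound on other eigenvalues
  have hμbound : ∀ i, i ≠ i₀ → |μ i| ≤ lam := by
    intro i hi
    obtain ⟨j, hj⟩ := hmem i
    have hj0 : j ≠ (⟨0, by omega⟩ : Fin N) := by
      intro h; exact hμne i hi (by rw [← hj, h, heig1])
    have hjval : 1 ≤ j.val := by
      rcases Nat.eq_zero_or_pos j.val with h0 | h1
      · exact absurd (Fin.ext h0) hj0
      · exact h1
    have hub : μ i ≤ eig ⟨1, hN⟩ := by
      rw [← hj]; exact hanti (by simp [Fin.le_def]; omega)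
    have hlb : eig ⟨N - 1, by omega⟩ ≤ μ i := by
      rw [← hj]; exact hanti (by simp [Fin.le_def]; omega)
    rw [abs_le, hlam]
    constructor
    · calc -(max |eig ⟨1, hN⟩| |eig ⟨N - 1, by omega⟩|)
          ≤ -|eig ⟨N - 1, by omega⟩| := neg_le_neg (le_max_right _ _)
        _ ≤ eig ⟨N - 1, by omega⟩ := neg_abs_le _
        _ ≤ μ i := hlb
    · calc μ i ≤ eig ⟨1, hN⟩ := hub
        _ ≤ |eig ⟨1, hN⟩| := le_abs_self _
        _ ≤ max |eig ⟨1, hN⟩| |eig ⟨N - 1, by omega⟩| := le_max_left _ _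
  -- eigenvector equations
  have hmv : ∀ i k, ∑ l, W k l * v i l = μ i * v i k := by
    intro i k
    have h := congrFun (hW.mulVec_eigenvectorBasis i) k
    simpa [Matrix.mulVec, dotProduct, hvdef, hμdef] using h
  -- orthonormality
  have hrow : ∀ i j, ∑ k, v i k * v j k = if i = j then 1 else 0 := by
    intro i j
    have h := hW.eigenvectorBasis.orthonormal
    rw [orthonormal_iff_ite] at h
    have h2 := h i j
    simpa [PiLp.inner_apply, RCLike.inner_apply, conj_trivial, hvdef, mul_comm] using h2
  have hcol : ∀ k l, ∑ i, v i k * v i l = if k = l then 1 else 0 := by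
    set V : Matrix (Fin N) (Fin N) ℝ := Matrix.of v with hV
    have hVVt : V * Vᵀ = 1 := by
      ext i j
      simp only [Matrix.mul_apply, Matrix.transpose_apply, Matrix.one_apply, hV, Matrix.of_apply]
      exact hrow i j
    have hVtV : Vᵀ * V = 1 := mul_eq_one_comm.mp hVVt
    intro k l
    have h := congrFun (congrFun hVtV k) l
    simpa [Matrix.mul_apply, Matrix.transpose_apply, Matrix.one_apply, hV] using h
  -- the constant eigenvector
  have hci0 : ∀ i, i ≠ i₀ → (∑ k, v i k) = 0 := by
    intro i hi
    have hkey : μ i * (∑ k, v i k) = (∑ k, v i k) := by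
      calc μ i * (∑ k, v i k) = ∑ k, μ i * v i k := by rw [Finset.mul_sum]
        _ = ∑ k, ∑ l, W k l * v i l := Finset.sum_congr rfl fun k _ => (hmv i k).symm
        _ = ∑ l, (∑ k, W k l) * v i l := by
            rw [Finset.sum_comm]
            exact Finset.sum_congr rfl fun l _ => (Finset.sum_mul _ _ _).symm
        _ = (∑ k, v i k) := by simp [hWcol]
    have : (μ i - 1) * (∑ k, v i k) = 0 := by ring_nf; linarith [hkey]
    rcases mul_eq_zero.mp this with h | h
    · exact absurd (by linarith [sub_eq_zero.mp h] : μ i = 1) (hμne i hi)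
    · exact h
  have hones : ∀ k, (∑ l, v i₀ l) * v i₀ k = 1 := by
    intro k
    have hcomp := aux_complete v hcol (fun _ => 1) k
    simp only [mul_one] at hcomp
    have hsum1 : ∑ i, (∑ l, v i l) * v i k = (∑ l, v i₀ l) * v i₀ k := by
      apply Finset.sum_eq_single
      · intro b _ hb
        rw [hci0 b hb, zero_mul]
      · intro h; exact absurd (Finset.mem_univ i₀) h
    rw [← hsum1]
    exact hcomp
  -- mean decomposition
  set m : ℝ := (N : ℝ)⁻¹ * ∑ j, x j with hmdef
  set me : ℝ := (N : ℝ)⁻¹ * ∑ j, e j with hmedef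
  set y : Fin N → ℝ := fun k => x k - m with hydef
  set f : Fin N → ℝ := fun k => e k - me with hfdef
  have hsumW : ∀ z : Fin N → ℝ, ∑ k, W.mulVec z k = ∑ l, z l := by
    intro z
    calc ∑ k, W.mulVec z k = ∑ k, ∑ l, W k l * z l := by
          simp [Matrix.mulVec, dotProduct]
      _ = ∑ l, (∑ k, W k l) * z l := by
          rw [Finset.sum_comm]
          exact Finset.sum_congr rfl fun l _ => (Finset.sum_mul _ _ _).symm
      _ = ∑ l, z l := by simp [hWcol]
  have hy0 : ∑ k, y k = 0 := by
    simp only [hydef]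
    rw [Finset.sum_sub_distrib, Finset.sum_const, Finset.card_univ, Fintype.card_fin,
      nsmul_eq_mul, hmdef]
    field_simp
    simp
  have hmean : (N : ℝ)⁻¹ * ∑ j, xplus j = m + me := by
    rw [hxplus]
    have : ∑ j, (W.mulVec x + e) j = ∑ j, x j + ∑ j, e j := by
      simp only [Pi.add_apply]
      rw [Finset.sum_add_distrib]
      congr 1
      exact hsumW x
    rw [this, hmdef, hmedef]
    ring
  have hdecomp : ∀ k, xplus k - (N : ℝ)⁻¹ * ∑ j, xplus j = W.mulVec y k + f k := by
    intro k
    rw [hmean, hxplus]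
    have hWy : W.mulVec y k = W.mulVec x k - m := by
      simp only [hydef, Matrix.mulVec, dotProduct]
      rw [show ∑ l, W k l * (x l - m) = ∑ l, (W k l * x l - m * W k l) from
        Finset.sum_congr rfl fun l _ => by ring]
      rw [Finset.sum_sub_distrib, ← Finset.mul_sum, hWrow k, mul_one]
    simp only [Pi.add_apply, hWy, hfdef]
    ring
  -- spectral bound: A ≤ lam^2 * Y
  set d : Fin N → ℝ := fun i => ∑ l, v i l * y l with hddef
  have hdi₀ : d i₀ = 0 := by
    have hvconst : ∀ k, v i₀ k = (∑ l, v i₀ l)⁻¹ := fun k =>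
      eq_inv_of_mul_eq_one_left (by rw [mul_comm]; exact hones k)
    have : d i₀ = (∑ l, v i₀ l)⁻¹ * ∑ l, y l := by
      simp only [hddef]
      rw [Finset.mul_sum]
      exact Finset.sum_congr rfl fun l _ => by rw [hvconst l]
    rw [this, hy0, mul_zero]
  have hy_repr : ∀ k, y k = ∑ i, d i * v i k := fun k => (aux_complete v hcol y k).symm
  have hWy_repr : ∀ k, W.mulVec y k = ∑ i, (μ i * d i) * v i k := by
    intro k
    calc W.mulVec y k = ∑ l, W k l * y l := by simp [Matrix.mulVec, dotProduct]
      _ = ∑ l, W k l * ∑ i, d i * v i l := Finset.sum_congr rfl fun l _ => by rw [← hy_repr l]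
      _ = ∑ l, ∑ i, d i * (W k l * v i l) := by
          refine Finset.sum_congr rfl fun l _ => ?_
          rw [Finset.mul_sum]
          exact Finset.sum_congr rfl fun i _ => by ring
      _ = ∑ i, d i * ∑ l, (W k l * v i l) := by
          rw [Finset.sum_comm]
          exact Finset.sum_congr rfl fun i _ => (Finset.mul_sum _ _ _).symm
      _ = ∑ i, (μ i * d i) * v i k := by
          refine Finset.sum_congr rfl fun i _ => ?_
          rw [hmv i k]
          ring
  have hParsevalY : ∑ k, y k ^ 2 = ∑ i, d i ^ 2 := by
    calc ∑ k, y k ^ 2 = ∑ k, (∑ i, d i * v i k) ^ 2 :=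
          Finset.sum_congr rfl fun k _ => by rw [← hy_repr k]
      _ = ∑ i, d i ^ 2 := aux_parseval v hrow d
  have hParsevalWy : ∑ k, (W.mulVec y k) ^ 2 = ∑ i, (μ i * d i) ^ 2 := by
    calc ∑ k, (W.mulVec y k) ^ 2 = ∑ k, (∑ i, (μ i * d i) * v i k) ^ 2 :=
          Finset.sum_congr rfl fun k _ => by rw [hWy_repr k]
      _ = ∑ i, (μ i * d i) ^ 2 := aux_parseval v hrow (fun i => μ i * d i)
  have hA : ∑ k, (W.mulVec y k) ^ 2 ≤ lam ^ 2 * ∑ k, y k ^ 2 := by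
    rw [hParsevalWy, hParsevalY, Finset.mul_sum]
    apply Finset.sum_le_sum
    intro i _
    by_cases hi : i = i₀
    · rw [hi, hdi₀]
      simp
    · have habs := hμbound i hi
      have h1 : μ i ^ 2 ≤ lam ^ 2 := by
        rw [← sq_abs (μ i)]
        exact pow_le_pow_left₀ (abs_nonneg _) habs 2
      calc (μ i * d i) ^ 2 = μ i ^ 2 * d i ^ 2 := by ring
        _ ≤ lam ^ 2 * d i ^ 2 := mul_le_mul_of_nonneg_right h1 (sq_nonneg _)
  -- f bound
  have hf : ∑ k, f k ^ 2 ≤ ∑ k, e k ^ 2 := by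
    have hse : ∑ k, e k = (N : ℝ) * me := by
      rw [hmedef]; field_simp
    have hexp : ∑ k, f k ^ 2 = ∑ k, e k ^ 2 - (N : ℝ) * me ^ 2 := by
      calc ∑ k, f k ^ 2
          = ∑ k, (e k ^ 2 - 2 * me * e k + me ^ 2) :=
            Finset.sum_congr rfl fun k _ => by simp only [hfdef]; ring
        _ = ∑ k, e k ^ 2 - 2 * me * ∑ k, e k + (N : ℝ) * me ^ 2 := by
            rw [Finset.sum_add_distrib, Finset.sum_sub_distrib, ← Finset.mul_sum,
              Finset.sum_const, Finset.card_univ, Fintype.card_fin, nsmul_eq_mul]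
        _ = ∑ k, e k ^ 2 - (N : ℝ) * me ^ 2 := by rw [hse]; ring
    have : 0 ≤ (N : ℝ) * me ^ 2 := by positivity
    linarith
  -- rewrite the goal
  have hgoal_lhs : ∑ i, (xplus i - (N : ℝ)⁻¹ * ∑ j, xplus j) ^ 2
      = ∑ k, (W.mulVec y k + f k) ^ 2 :=
    Finset.sum_congr rfl fun k _ => by rw [hdecomp k]
  rw [hgoal_lhs]
  have hxm : ∑ i, (x i - m) ^ 2 = ∑ k, y k ^ 2 :=
    Finset.sum_congr rfl fun k _ => by simp only [hydef]
  rw [hxm]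
  have hYnonneg : (0:ℝ) ≤ ∑ k, y k ^ 2 := Finset.sum_nonneg fun k _ => sq_nonneg _
  have hFnonneg : (0:ℝ) ≤ ∑ k, f k ^ 2 := Finset.sum_nonneg fun k _ => sq_nonneg _
  -- Young-type inequality
  have hYoung : ∀ ε : ℝ, 0 < ε → ∑ k, (W.mulVec y k + f k) ^ 2
      ≤ (1 + ε) * ∑ k, (W.mulVec y k) ^ 2 + (1 + ε⁻¹) * ∑ k, f k ^ 2 := by
    intro ε hε
    rw [Finset.mul_sum, Finset.mul_sum, ← Finset.sum_add_distrib]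
    apply Finset.sum_le_sum
    intro k _
    set a := W.mulVec y k
    set b := f k
    have hid : ε * ((1 + ε) * a ^ 2 + (1 + ε⁻¹) * b ^ 2 - (a + b) ^ 2) = (ε * a - b) ^ 2 := by
      field_simp
      ring
    have h2 : 0 ≤ ε * ((1 + ε) * a ^ 2 + (1 + ε⁻¹) * b ^ 2 - (a + b) ^ 2) := by
      rw [hid]; exact sq_nonneg _
    have h3 := mul_nonneg (inv_nonneg.mpr hε.le) h2
    rw [← mul_assoc, inv_mul_cancel₀ hε.ne', one_mul] at h3
    linarith
  by_cases hlz : lam = 0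
  · -- lam = 0 : W.mulVec y = 0
    have hA0 : ∑ k, (W.mulVec y k) ^ 2 = 0 := by
      have h1 : ∑ k, (W.mulVec y k) ^ 2 ≤ 0 := by
        rw [hlz] at hA; simpa using hA
      have h2 : 0 ≤ ∑ k, (W.mulVec y k) ^ 2 := Finset.sum_nonneg fun k _ => sq_nonneg _
      linarith
    have hWy0 : ∀ k, W.mulVec y k = 0 := by
      intro k
      have := (Finset.sum_eq_zero_iff_of_nonneg (fun k _ => sq_nonneg (W.mulVec y k))).mp hA0 k
        (Finset.mem_univ k)
      exact pow_eq_zero_iff (by norm_num : (2:ℕ) ≠ 0) |>.mp this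
    have : ∑ k, (W.mulVec y k + f k) ^ 2 = ∑ k, f k ^ 2 :=
      Finset.sum_congr rfl fun k _ => by rw [hWy0 k, zero_add]
    rw [this, hlz]
    norm_num
    linarith
  · -- lam ≠ 0
    have hlampos : 0 < lam := lt_of_le_of_ne hlam_nonneg (Ne.symm hlz)
    have hlamsq : 0 < lam ^ 2 := by positivity
    have hlamsq1 : lam ^ 2 < 1 := by nlinarith
    set ε : ℝ := (1 - lam ^ 2) / (2 * lam ^ 2) with hεdef
    have hε : 0 < ε := by
      apply div_pos
      · linarith
      · linarith
    have h1 : (1 + ε) * lam ^ 2 = (1 + lam ^ 2) / 2 := by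
      rw [hεdef]; field_simp; ring
    have hpos1 : (0:ℝ) < 1 - lam ^ 2 := by linarith
    have hne1 : (1:ℝ) - lam ^ 2 ≠ 0 := ne_of_gt hpos1
    have h2 : 1 + ε⁻¹ = (1 + lam ^ 2) / (1 - lam ^ 2) := by
      rw [hεdef, inv_div]
      calc 1 + 2 * lam ^ 2 / (1 - lam ^ 2)
          = (1 - lam ^ 2) / (1 - lam ^ 2) + 2 * lam ^ 2 / (1 - lam ^ 2) := by
            rw [div_self hne1]
        _ = ((1 - lam ^ 2) + 2 * lam ^ 2) / (1 - lam ^ 2) := (add_div _ _ _).symm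
        _ = (1 + lam ^ 2) / (1 - lam ^ 2) := by ring_nf
    have hcoef2 : 0 ≤ 1 + ε⁻¹ := by positivity
    calc ∑ k, (W.mulVec y k + f k) ^ 2
        ≤ (1 + ε) * ∑ k, (W.mulVec y k) ^ 2 + (1 + ε⁻¹) * ∑ k, f k ^ 2 := hYoung ε hε
      _ ≤ (1 + ε) * (lam ^ 2 * ∑ k, y k ^ 2) + (1 + ε⁻¹) * ∑ k, e k ^ 2 := by
          have t1 : (1 + ε) * ∑ k, (W.mulVec y k) ^ 2 ≤ (1 + ε) * (lam ^ 2 * ∑ k, y k ^ 2) :=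
            mul_le_mul_of_nonneg_left hA (by positivity)
          have t2 : (1 + ε⁻¹) * ∑ k, f k ^ 2 ≤ (1 + ε⁻¹) * ∑ k, e k ^ 2 :=
            mul_le_mul_of_nonneg_left hf hcoef2
          linarith
      _ = ((1 + lam ^ 2) / 2) * ∑ k, y k ^ 2 + ((1 + lam ^ 2) / (1 - lam ^ 2)) * ∑ k, e k ^ 2 := by
          rw [← mul_assoc, h1, h2]
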